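/- arXiv:2105.09497 — 2 statements merged into one kernel-verified Lean document; each statement's English description precedes it below -/
import Mathlib

section
/- For the linear-Gaussian UKI covariance recursion C_{n+1}^{-1} = (1/2)C_n^{-1} + (1/2)GᵀΣ_η^{-1}G with GᵀΣ_η^{-1}G positive definite, the sequence C_n converges and its limit is C_∞ = (GᵀΣ_η^{-1}G)^{-1}, i.e., the fixed point X of X^{-1} = (1/2)X^{-1} + (1/2)GᵀΣ_η^{-1}G. -/
open Matrix Filter Topology

private lemma posdef_smul' {k : ℕ} {M : Matrix (Fin k) (Fin k) ℝ} (hM : M.PosDef)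
    {c : ℝ} (hc : 0 < c) : (c • M).PosDef := by
  refine ⟨?_, fun x hx => ?_⟩
  · unfold Matrix.IsHermitian
    rw [conjTranspose_smul, hM.1.eq]
    simp
  · convert mul_pos hc (hM.2 hx) using 1
    simp only [Finsupp.sum, Finset.mul_sum, Matrix.smul_apply, smul_eq_mul]
    exact Finset.sum_congr rfl fun i _ => Finset.sum_congr rfl fun j _ => by ring

/-- For the linear-Gaussian UKI covariance recursion
`C_{n+1}⁻¹ = ½C_n⁻¹ + ½GᵀΣ_η⁻¹G` with `S = GᵀΣ_η⁻¹G` positive definite and `C_0`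
positive definite, the sequence `C_n` converges to `C_∞ = S⁻¹`, the fixed point of
`X⁻¹ = ½X⁻¹ + ½S`. -/
theorem uki_linear_covariance_convergence {nθ ny : ℕ}
    (G : Matrix (Fin ny) (Fin nθ) ℝ)
    (Se : Matrix (Fin ny) (Fin ny) ℝ) (hSe : Se.PosDef)
    (S : Matrix (Fin nθ) (Fin nθ) ℝ) (hS : S = Gᵀ * Se⁻¹ * G) (hSpd : S.PosDef)
    (C : ℕ → Matrix (Fin nθ) (Fin nθ) ℝ)
    (hC0 : (C 0).PosDef)
    (hrec : ∀ n, (C (n + 1))⁻¹ = (1 / 2 : ℝ) • (C n)⁻¹ + (1 / 2 : ℝ) • S) :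
    Tendsto C atTop (𝓝 S⁻¹) := by
  -- all inverses are positive definite
  have hBpos : ∀ n, ((C n)⁻¹).PosDef := by
    intro n
    induction n with
    | zero => exact hC0.inv
    | succ k ih =>
      rw [hrec k]
      exact (posdef_smul' ih (by norm_num)).add (posdef_smul' hSpd (by norm_num))
  -- each C n is the inverse of its inverse
  have hCeq : ∀ n, C n = ((C n)⁻¹)⁻¹ := by
    intro n
    have : IsUnit (C n).det := by
      rw [← Matrix.isUnit_nonsing_inv_det_iff]
      exact (hBpos n).isUnit.map detMonoidHom
    exact (Matrix.nonsing_inv_nonsing_inv _ this).symm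
  -- closed form for the inverses
  have hB : ∀ n, (C n)⁻¹ = S + ((1 : ℝ) / 2) ^ n • ((C 0)⁻¹ - S) := by
    intro n
    induction n with
    | zero => simp
    | succ k ih =>
      rw [hrec k, ih, pow_succ]
      module
  -- inverses tend to S
  have hBtend : Tendsto (fun n => (C n)⁻¹) atTop (𝓝 S) := by
    have h1 : Tendsto (fun n : ℕ => ((1 : ℝ) / 2) ^ n) atTop (𝓝 0) := by
      apply tendsto_pow_atTop_nhds_zero_of_lt_one <;> norm_num
    have h2 : Tendsto (fun n : ℕ => S + ((1 : ℝ) / 2) ^ n • ((C 0)⁻¹ - S)) atTop (𝓝 S) := by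
      simpa using (h1.smul_const ((C 0)⁻¹ - S)).const_add S
    exact h2.congr fun n => (hB n).symm
  -- inversion is continuous at S
  have hcont : ContinuousAt Inv.inv S := by
    apply continuousAt_matrix_inv
    have hdet : IsUnit S.det := hSpd.isUnit.map detMonoidHom
    have := NormedRing.inverse_continuousAt hdet.unit
    rwa [hdet.unit_spec] at this
  have : Tendsto (fun n => ((C n)⁻¹)⁻¹) atTop (𝓝 S⁻¹) := hcont.tendsto.comp hBtend
  convert this using 1
  funext n
  exact hCeq n
end

section
/- In the fixed point of the linear-Gaussian UKI, the mean satisfies m_∞ = (GᵀΣ_η^{-1}G)^{-1}GᵀΣ_η^{-1}y, i.e., m_∞ is the minimizer of the least-squares objective Φ(θ) = ½‖Σ_η^{-1/2}(y − Gθ)‖². -/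
open Matrix

lemma posdef_two_smul {n : ℕ} {M : Matrix (Fin n) (Fin n) ℝ} (hM : M.PosDef) :
    ((2 : ℝ) • M).PosDef := by
  have ht : Mᵀ = M := by simpa using hM.1.eq
  refine Matrix.PosDef.of_dotProduct_mulVec_pos (by simp [Matrix.IsHermitian, ht]) fun x hx => ?_
  rw [smul_mulVec, dotProduct_smul]
  have := hM.dotProduct_mulVec_pos hx
  simp only [star_trivial] at this ⊢
  positivity

lemma dot_mulVec_left {m n : ℕ} (B : Matrix (Fin m) (Fin n) ℝ) (d : Fin n → ℝ)
    (w : Fin m → ℝ) : (B *ᵥ d) ⬝ᵥ w = d ⬝ᵥ (Bᵀ *ᵥ w) := by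
  rw [dotProduct_comm, dotProduct_mulVec, ← mulVec_transpose, dotProduct_comm]

/-- At the fixed point of the linear-Gaussian UKI, the mean
`m_∞ = (GᵀΣ_η⁻¹G)⁻¹GᵀΣ_η⁻¹y` is a fixed point of the mean update with
`C = (GᵀΣ_η⁻¹G)⁻¹`, and it is the unique minimizer of the least-squares objective
`Φ(θ) = ½‖Σ_η^{-1/2}(y − Gθ)‖² = ½ (y − Gθ)ᵀΣ_η⁻¹(y − Gθ)`. -/
theorem uki_linear_mean_fixed_point {nθ ny : ℕ}
    (G : Matrix (Fin ny) (Fin nθ) ℝ)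
    (Se : Matrix (Fin ny) (Fin ny) ℝ) (hSe : Se.PosDef)
    (hrank : (Gᵀ * Se⁻¹ * G).PosDef)
    (y : Fin ny → ℝ)
    (C : Matrix (Fin nθ) (Fin nθ) ℝ) (hC : C = (Gᵀ * Se⁻¹ * G)⁻¹)
    (minf : Fin nθ → ℝ) (hm : minf = ((Gᵀ * Se⁻¹ * G)⁻¹ * Gᵀ * Se⁻¹) *ᵥ y)
    (Φ : (Fin nθ → ℝ) → ℝ)
    (hΦ : ∀ θ, Φ θ = (1 / 2) * ((y - G *ᵥ θ) ⬝ᵥ (Se⁻¹ *ᵥ (y - G *ᵥ θ)))) :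
    (minf + (C * Gᵀ * (G * C * Gᵀ + (2 : ℝ) • Se)⁻¹) *ᵥ (y - G *ᵥ minf) = minf) ∧
    (∀ θ, Φ minf ≤ Φ θ) ∧ (∀ θ, Φ θ = Φ minf → θ = minf) := by
  obtain ⟨A, hA⟩ : ∃ A' : Matrix (Fin nθ) (Fin nθ) ℝ, A' = Gᵀ * Se⁻¹ * G := ⟨_, rfl⟩
  rw [← hA] at hrank hC hm
  obtain ⟨r, hr⟩ : ∃ r' : Fin ny → ℝ, r' = y - G *ᵥ minf := ⟨_, rfl⟩
  rw [← hr]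
  have hAdet : IsUnit A.det := (isUnit_iff_isUnit_det _).1 hrank.isUnit
  have hSedet : IsUnit Se.det := (isUnit_iff_isUnit_det _).1 hSe.isUnit
  -- key orthogonality: Gᵀ Se⁻¹ r = 0
  have key : Gᵀ *ᵥ (Se⁻¹ *ᵥ r) = 0 := by
    have h1 : Gᵀ *ᵥ (Se⁻¹ *ᵥ r) = (Gᵀ * Se⁻¹) *ᵥ y - A *ᵥ minf := by
      rw [hr, mulVec_sub, mulVec_sub, mulVec_mulVec, mulVec_mulVec, hA]
      simp [Matrix.mul_assoc]
    rw [h1, hm, mulVec_mulVec, ← Matrix.mul_assoc, ← Matrix.mul_assoc,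
      Matrix.mul_nonsing_inv A hAdet, Matrix.one_mul, sub_self]
  have hSeInvSymm : (Se⁻¹)ᵀ = Se⁻¹ := by
    have := hSe.inv.isHermitian.eq
    simpa using this
  -- part 1
  have hCpos : C.PosDef := hC ▸ hrank.inv
  have hGCGt : (G * C * Gᵀ).PosSemidef := by
    have := hCpos.posSemidef.mul_mul_conjTranspose_same G
    simpa using this
  have hM : (G * C * Gᵀ + (2 : ℝ) • Se).PosDef :=
    Matrix.PosDef.posSemidef_add hGCGt (posdef_two_smul hSe)
  set M := G * C * Gᵀ + (2 : ℝ) • Se with hMdef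
  have hMdet : IsUnit M.det := (isUnit_iff_isUnit_det _).1 hM.isUnit
  have hMv : M *ᵥ ((2⁻¹ : ℝ) • (Se⁻¹ *ᵥ r)) = r := by
    have h2 : (G * C * Gᵀ) *ᵥ (Se⁻¹ *ᵥ r) = 0 := by
      rw [← mulVec_mulVec, key, mulVec_zero]
    have h3 : ((2 : ℝ) • Se) *ᵥ ((2⁻¹ : ℝ) • (Se⁻¹ *ᵥ r)) = r := by
      rw [mulVec_smul, smul_mulVec, smul_smul, mulVec_mulVec,
        Matrix.mul_nonsing_inv Se hSedet, one_mulVec]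
      norm_num
    rw [hMdef, add_mulVec, mulVec_smul, h2, smul_zero, zero_add, h3]
  have hMinv : M⁻¹ *ᵥ r = (2⁻¹ : ℝ) • (Se⁻¹ *ᵥ r) := by
    conv_lhs => rw [← hMv]
    rw [mulVec_mulVec, Matrix.nonsing_inv_mul M hMdet, one_mulVec]
  have part1 : minf + (C * Gᵀ * M⁻¹) *ᵥ r = minf := by
    rw [← mulVec_mulVec, hMinv, mulVec_smul, ← mulVec_mulVec, key, mulVec_zero, smul_zero,
      add_zero]
  -- quadratic expansion
  have main : ∀ d : Fin nθ → ℝ,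
      (r - G *ᵥ d) ⬝ᵥ (Se⁻¹ *ᵥ (r - G *ᵥ d)) = r ⬝ᵥ (Se⁻¹ *ᵥ r) + d ⬝ᵥ (A *ᵥ d) := by
    intro d
    have cross1 : (G *ᵥ d) ⬝ᵥ (Se⁻¹ *ᵥ r) = 0 := by
      rw [dot_mulVec_left, key, dotProduct_zero]
    have cross2 : r ⬝ᵥ (Se⁻¹ *ᵥ (G *ᵥ d)) = 0 := by
      rw [dotProduct_mulVec, ← mulVec_transpose, hSeInvSymm, dotProduct_comm, cross1]
    have quad : (G *ᵥ d) ⬝ᵥ (Se⁻¹ *ᵥ (G *ᵥ d)) = d ⬝ᵥ (A *ᵥ d) := by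
      rw [dot_mulVec_left, mulVec_mulVec, mulVec_mulVec, hA]
    rw [mulVec_sub, dotProduct_sub, sub_dotProduct, sub_dotProduct, cross1, cross2, quad]
    ring
  have expand : ∀ θ, Φ θ = Φ minf + 2⁻¹ * ((θ - minf) ⬝ᵥ (A *ᵥ (θ - minf))) := by
    intro θ
    have hyd : y - G *ᵥ θ = r - G *ᵥ (θ - minf) := by
      rw [hr, mulVec_sub]; abel
    have hΦm : Φ minf = (1 / 2) * (r ⬝ᵥ (Se⁻¹ *ᵥ r)) := by rw [hΦ minf, ← hr]
    rw [hΦ θ, hyd, hΦm, main (θ - minf)]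
    ring
  refine ⟨part1, fun θ => ?_, fun θ hθ => ?_⟩
  · rw [expand θ]
    have := hrank.posSemidef.dotProduct_mulVec_nonneg (θ - minf)
    simp only [star_trivial] at this
    nlinarith [this]
  · by_contra hne
    have hd : θ - minf ≠ 0 := sub_ne_zero_of_ne hne
    have hpos := hrank.dotProduct_mulVec_pos hd
    simp only [star_trivial] at hpos
    rw [expand θ] at hθ
    nlinarith [hpos]
end
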